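/- For a linear isometry T of (V, d_{w,(P,π)}), the map η_T : P → P defined by η_T(i) = max I_{T(v_i)}^P (for any nonzero v_i ∈ V_i; this is well defined) is a (P,π)-automorphism of P. -/

import Mathlib

attribute [local instance] Classical.propDecidable

noncomputable section

variable {ι F : Type*}

section Defs
variable [Fintype ι] [PartialOrder ι] [Field F] [Fintype F] {k : ι → ℕ}

/-- block support -/
def suppB (u : ∀ i, Fin (k i) → F) : Finset ι :=
  Finset.univ.filter fun i => u i ≠ 0

/-- order ideal generated by the block support -/
def idealOf (u : ∀ i, Fin (k i) → F) : Finset ι :=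
  Finset.univ.filter fun i => ∃ j ∈ suppB u, i ≤ j

/-- maximal elements of the ideal generated by the support -/
def maxOf (u : ∀ i, Fin (k i) → F) : Finset ι :=
  (idealOf u).filter fun i => ∀ j ∈ idealOf u, i ≤ j → i = j

/-- maximal weight of a block -/
def Wblk (w : F → ℕ) (u : ∀ i, Fin (k i) → F) (i : ι) : ℕ :=
  Finset.univ.sup fun j => w (u i j)

/-- maximal value of the weight -/
def Mw (w : F → ℕ) : ℕ := Finset.univ.sup w

/-- minimal value of the weight on nonzero elements -/
def mw (w : F → ℕ) : ℕ := sInf (w '' {a | a ≠ 0})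

/-- the weighted poset block weight -/
def omegaW (w : F → ℕ) (u : ∀ i, Fin (k i) → F) : ℕ :=
  (∑ i ∈ maxOf u, Wblk w u i) + (idealOf u \ maxOf u).card * Mw w

/-- principal ideal generated by `i` -/
def pIdeal (i : ι) : Finset ι := Finset.univ.filter fun j => j ≤ i

end Defs


set_option linter.unusedSectionVars false
set_option linter.unusedVariables false
section Aux
variable [Fintype ι] [PartialOrder ι] [Field F] [Fintype F] {k : ι → ℕ}

/-- auxiliary: per-element contribution to the weight -/
def gfun (w : F → ℕ) (u : ∀ i, Fin (k i) → F) (m : ι) : ℕ :=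
  if ∃ j, m < j ∧ u j ≠ 0 then Mw w else Wblk w u m

/-- support-in predicate -/
def SIn (u : ∀ i, Fin (k i) → F) (S : Finset ι) : Prop := ∀ m, m ∉ S → u m = 0

/-- down-closed -/
def DC (S : Finset ι) : Prop := ∀ ⦃a b : ι⦄, a ≤ b → b ∈ S → a ∈ S

variable {w : F → ℕ}

lemma le_Mw (a : F) : w a ≤ Mw w := Finset.le_sup (Finset.mem_univ a)

lemma mw_achieved : ∃ a : F, a ≠ 0 ∧ w a = mw w := by
  have hne : (w '' {a | a ≠ 0}).Nonempty := ⟨w 1, ⟨1, one_ne_zero, rfl⟩⟩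
  have := Nat.sInf_mem hne
  obtain ⟨a, ha, h⟩ := this
  exact ⟨a, ha, h⟩

lemma mw_le {a : F} (ha : a ≠ 0) : mw w ≤ w a := Nat.sInf_le ⟨a, ha, rfl⟩

lemma mw_pos (hw0 : ∀ a : F, w a = 0 ↔ a = 0) : 0 < mw w := by
  obtain ⟨a, ha, h⟩ := mw_achieved (w := w)
  have : w a ≠ 0 := fun h' => ha ((hw0 a).1 h')
  omega

lemma mw_le_Mw : mw w ≤ Mw w := by
  obtain ⟨a, _, h⟩ := mw_achieved (w := w)
  exact h ▸ le_Mw a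

lemma Mw_pos (hw0 : ∀ a : F, w a = 0 ↔ a = 0) : 0 < Mw w :=
  lt_of_lt_of_le (mw_pos hw0) mw_le_Mw

lemma Mw_achieved (hw0 : ∀ a : F, w a = 0 ↔ a = 0) : ∃ a : F, a ≠ 0 ∧ w a = Mw w := by
  obtain ⟨a, -, h⟩ := Finset.exists_mem_eq_sup (Finset.univ : Finset F) Finset.univ_nonempty w
  refine ⟨a, ?_, h.symm⟩
  intro rfl0
  have h1 := Mw_pos (w := w) hw0
  have : Mw w = 0 := by rw [Mw, h, rfl0, (hw0 0).2 rfl]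
  omega

lemma Wblk_le_Mw {u : ∀ i, Fin (k i) → F} {m : ι} : Wblk w u m ≤ Mw w :=
  Finset.sup_le fun j _ => le_Mw _

lemma Wblk_eq_zero_iff (hw0 : ∀ a : F, w a = 0 ↔ a = 0) {u : ∀ i, Fin (k i) → F} {m : ι} :
    Wblk w u m = 0 ↔ u m = 0 := by
  rw [Wblk]
  rw [show (0 : ℕ) = ⊥ from rfl, Finset.sup_eq_bot_iff]
  constructor
  · intro h
    funext j
    exact (hw0 _).1 (h j (Finset.mem_univ j))
  · intro h j _
    rw [h]
    exact (hw0 0).2 rfl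

lemma mw_le_Wblk (hw0 : ∀ a : F, w a = 0 ↔ a = 0) {u : ∀ i, Fin (k i) → F} {m : ι}
    (h : u m ≠ 0) : mw w ≤ Wblk w u m := by
  have : ∃ j, u m j ≠ 0 := by
    by_contra hc
    push_neg at hc
    exact h (funext hc)
  obtain ⟨j, hj⟩ := this
  exact le_trans (mw_le hj) (Finset.le_sup (f := fun j => w (u m j)) (Finset.mem_univ j))

end Aux
set_option linter.unusedSectionVars false
set_option maxHeartbeats 1000000
section Aux2
variable [Fintype ι] [PartialOrder ι] [Field F] [Fintype F] {k : ι → ℕ} {w : F → ℕ}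
variable {u u' : ∀ i, Fin (k i) → F} {m : ι}

lemma mem_suppB : m ∈ suppB u ↔ u m ≠ 0 := by simp [suppB]

lemma mem_idealOf : m ∈ idealOf u ↔ ∃ j, u j ≠ 0 ∧ m ≤ j := by
  simp only [idealOf, suppB, Finset.mem_filter, Finset.mem_univ, true_and]

lemma mem_maxOf : m ∈ maxOf u ↔ u m ≠ 0 ∧ ∀ j, m < j → u j = 0 := by
  constructor
  · intro h
    rw [maxOf, Finset.mem_filter] at h
    obtain ⟨hI, hmax⟩ := h
    obtain ⟨j, hj, hle⟩ := mem_idealOf.1 hI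
    have hjI : j ∈ idealOf u := mem_idealOf.2 ⟨j, hj, le_refl j⟩
    have : m = j := hmax j hjI hle
    subst this
    refine ⟨hj, fun j' hj' => ?_⟩
    by_contra hc
    have : j' ∈ idealOf u := mem_idealOf.2 ⟨j', hc, le_refl _⟩
    exact absurd (hmax j' this hj'.le) (ne_of_lt hj')
  · rintro ⟨h1, h2⟩
    rw [maxOf, Finset.mem_filter]
    refine ⟨mem_idealOf.2 ⟨m, h1, le_refl m⟩, fun j hj hle => ?_⟩
    obtain ⟨j', hj', hle'⟩ := mem_idealOf.1 hj
    have hmj' : m ≤ j' := le_trans hle hle'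
    have : m = j' := by
      by_contra hc
      exact hj' (h2 j' (lt_of_le_of_ne hmj' hc))
    exact le_antisymm hle (this ▸ hle')

lemma gfun_le : gfun w u m ≤ Mw w := by
  rw [gfun]; split
  · exact le_refl _
  · exact Wblk_le_Mw

lemma gfun_congr (h : ∀ j, m ≤ j → u j = u' j) : gfun w u m = gfun w u' m := by
  rw [gfun, gfun]
  have he : (∃ j, m < j ∧ u j ≠ 0) ↔ (∃ j, m < j ∧ u' j ≠ 0) := by
    constructor <;> rintro ⟨j, h1, h2⟩ <;> exact ⟨j, h1, by rw [← h j h1.le] at *; exact h2⟩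
  have hw : Wblk w u m = Wblk w u' m := by rw [Wblk, Wblk, h m (le_refl m)]
  rw [hw]
  exact if_congr he rfl rfl

lemma gfun_eq_zero (hw0 : ∀ a : F, w a = 0 ↔ a = 0) (h : ∀ j, m ≤ j → u j = 0) :
    gfun w u m = 0 := by
  rw [gfun, if_neg, Wblk_eq_zero_iff hw0]
  · exact h m (le_refl m)
  · rintro ⟨j, h1, h2⟩
    exact h2 (h j h1.le)

lemma gfun_of_above (h : ∃ j, m < j ∧ u j ≠ 0) : gfun w u m = Mw w := if_pos h

lemma gfun_of_not_above (h : ¬ ∃ j, m < j ∧ u j ≠ 0) : gfun w u m = Wblk w u m := if_neg h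

lemma mw_le_gfun (hw0 : ∀ a : F, w a = 0 ↔ a = 0) (h : u m ≠ 0) : mw w ≤ gfun w u m := by
  rw [gfun]; split
  · exact mw_le_Mw
  · exact mw_le_Wblk hw0 h

lemma omegaW_eq_sum (hw0 : ∀ a : F, w a = 0 ↔ a = 0) :
    omegaW w u = ∑ m, gfun w u m := by
  have hMsub : maxOf u ⊆ idealOf u := Finset.filter_subset _ _
  have hIsub : idealOf u ⊆ Finset.univ := Finset.subset_univ _
  have h1 : ∑ m, gfun w u m = ∑ m ∈ idealOf u, gfun w u m := by
    refine (Finset.sum_subset hIsub ?_).symm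
    intro m _ hm
    refine gfun_eq_zero hw0 (fun j hj => ?_)
    by_contra hc
    exact hm (mem_idealOf.2 ⟨j, hc, hj⟩)
  have h2 : ∑ m ∈ idealOf u, gfun w u m
      = ∑ m ∈ maxOf u, gfun w u m + ∑ m ∈ idealOf u \ maxOf u, gfun w u m := by
    rw [← Finset.sum_union (Finset.disjoint_sdiff)]
    congr 1
    rw [Finset.union_sdiff_of_subset hMsub]
  have h3 : ∀ m ∈ maxOf u, gfun w u m = Wblk w u m := by
    intro m hm
    obtain ⟨h1', h2'⟩ := mem_maxOf.1 hm
    exact gfun_of_not_above (by rintro ⟨j, hj1, hj2⟩; exact hj2 (h2' j hj1))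
  have h4 : ∀ m ∈ idealOf u \ maxOf u, gfun w u m = Mw w := by
    intro m hm
    rw [Finset.mem_sdiff] at hm
    obtain ⟨hmI, hmM⟩ := hm
    refine gfun_of_above ?_
    by_contra hc
    push_neg at hc
    obtain ⟨j, hj, hle⟩ := mem_idealOf.1 hmI
    have hmj : m = j := by
      by_contra hne
      exact hj (hc j (lt_of_le_of_ne hle hne))
    subst hmj
    exact hmM (mem_maxOf.2 ⟨hj, fun j' hj' => by
      by_contra hc2
      exact hc2 (hc j' hj')⟩)
  rw [omegaW, h1, h2, Finset.sum_congr rfl h3, Finset.sum_congr rfl h4,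
    Finset.sum_const, smul_eq_mul]

lemma omegaW_zero (hw0 : ∀ a : F, w a = 0 ↔ a = 0) :
    omegaW w (0 : ∀ i, Fin (k i) → F) = 0 := by
  rw [omegaW_eq_sum hw0]
  exact Finset.sum_eq_zero fun m _ => gfun_eq_zero hw0 (fun _ _ => rfl)

lemma omegaW_eq_zero_iff (hw0 : ∀ a : F, w a = 0 ↔ a = 0) :
    omegaW w u = 0 ↔ u = 0 := by
  constructor
  · intro h
    by_contra hc
    have : ∃ m, u m ≠ 0 := by
      by_contra hc2; push_neg at hc2; exact hc (funext hc2)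
    obtain ⟨m, hm⟩ := this
    have h1 : mw w ≤ gfun w u m := mw_le_gfun hw0 hm
    have h2 : gfun w u m ≤ omegaW w u := by
      rw [omegaW_eq_sum hw0]
      exact Finset.single_le_sum (f := fun m => gfun w u m) (fun _ _ => Nat.zero_le _)
        (Finset.mem_univ m)
    have := mw_pos hw0
    omega
  · rintro rfl; exact omegaW_zero hw0

lemma omegaW_le_card (hw0 : ∀ a : F, w a = 0 ↔ a = 0) {S : Finset ι} (hdc : DC S)
    (hu : SIn u S) : omegaW w u ≤ S.card * Mw w := by
  rw [omegaW_eq_sum hw0]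
  have h1 : ∑ m, gfun w u m = ∑ m ∈ S, gfun w u m := by
    refine (Finset.sum_subset (Finset.subset_univ S) ?_).symm
    intro m _ hm
    refine gfun_eq_zero hw0 (fun j hj => ?_)
    refine hu j (fun hjS => hm (hdc hj hjS))
  rw [h1]
  exact Finset.sum_le_card_nsmul S _ _ (fun m _ => gfun_le)

lemma SIn_sum {α : Type*} {s : Finset α} {f : α → ∀ i, Fin (k i) → F} {S : Finset ι}
    (h : ∀ x ∈ s, SIn (f x) S) : SIn (∑ x ∈ s, f x) S := by
  intro m hm
  rw [Finset.sum_apply]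
  exact Finset.sum_eq_zero fun x hx => h x hx m hm

lemma SIn_single {i : ι} {v : Fin (k i) → F} {S : Finset ι} (h : i ∈ S) :
    SIn (Pi.single i v) S := by
  intro m hm
  have hne : m ≠ i := fun he => hm (by rw [he]; exact h)
  simp [Pi.single_eq_of_ne hne]

lemma SIn_mono {S S' : Finset ι} (hS : S ⊆ S') (h : SIn u S) : SIn u S' :=
  fun m hm => h m (fun h2 => hm (hS h2))

lemma DC_pIdeal (i : ι) : DC (pIdeal i) := by
  intro a b hab hb
  simp only [pIdeal, Finset.mem_filter, Finset.mem_univ, true_and] at *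
  exact le_trans hab hb

lemma mem_pIdeal {i j : ι} : j ∈ pIdeal i ↔ j ≤ i := by
  simp [pIdeal]

end Aux2
section Aux3
variable [Fintype ι] [PartialOrder ι] [Field F] [Fintype F] {k : ι → ℕ} {w : F → ℕ}

/-- fill each block of `S` with `a` in the first coordinate -/
def fillV (k : ι → ℕ) (S : Finset ι) (a : F) : ∀ i, Fin (k i) → F :=
  fun m j => if m ∈ S ∧ (j : ℕ) = 0 then a else 0

lemma fillV_SIn {S : Finset ι} {a : F} : SIn (fillV k S a) S := by
  intro m hm
  funext j
  simp [fillV, hm]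

lemma Wblk_fillV (hk : ∀ i, 0 < k i) {S : Finset ι} {a : F} {m : ι} (hm : m ∈ S)
    (hw0 : ∀ b : F, w b = 0 ↔ b = 0) (ha : w a = Mw w) :
    Wblk w (fillV k S a) m = Mw w := by
  refine le_antisymm Wblk_le_Mw ?_
  have : fillV k S a m ⟨0, hk m⟩ = a := by simp [fillV, hm]
  calc Mw w = w (fillV k S a m ⟨0, hk m⟩) := by rw [this, ha]
    _ ≤ Wblk w (fillV k S a) m :=
      Finset.le_sup (f := fun j => w (fillV k S a m j)) (Finset.mem_univ _)

lemma gfun_fillV (hk : ∀ i, 0 < k i) {S : Finset ι} {a : F} {m : ι} (hm : m ∈ S)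
    (hw0 : ∀ b : F, w b = 0 ↔ b = 0) (ha : w a = Mw w) :
    gfun w (fillV k S a) m = Mw w := by
  rw [gfun]; split
  · rfl
  · exact Wblk_fillV hk hm hw0 ha

lemma omega_fillV (hk : ∀ i, 0 < k i) {S : Finset ι} (hdc : DC S) {a : F}
    (hw0 : ∀ b : F, w b = 0 ↔ b = 0) (ha : w a = Mw w) :
    omegaW w (fillV k S a) = S.card * Mw w := by
  rw [omegaW_eq_sum hw0]
  rw [← Finset.sum_subset (Finset.subset_univ S) (fun m _ hm => gfun_eq_zero hw0 (fun j hj => by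
    refine fillV_SIn j (fun hjS => hm (hdc hj hjS))))]
  rw [Finset.sum_congr rfl (fun m hm => gfun_fillV hk hm hw0 ha), Finset.sum_const, smul_eq_mul]

/-- weight of a vector supported in a principal ideal with nonzero top block -/
lemma omega_cone (hw0 : ∀ b : F, w b = 0 ↔ b = 0) {u : ∀ i, Fin (k i) → F} {i : ι}
    (hu : SIn u (pIdeal i)) (hi : u i ≠ 0) :
    omegaW w u = Wblk w u i + ((pIdeal i).erase i).card * Mw w := by
  rw [omegaW_eq_sum hw0]
  have hnoab : ∀ j, i < j → u j = 0 := by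
    intro j hj
    refine hu j (fun hjI => absurd (mem_pIdeal.1 hjI) (not_le_of_gt hj))
  have h1 : ∑ m, gfun w u m = ∑ m ∈ pIdeal i, gfun w u m := by
    refine (Finset.sum_subset (Finset.subset_univ _) (fun m _ hm => gfun_eq_zero hw0
      (fun j hj => hu j (fun hjI => hm (mem_pIdeal.2 (le_trans hj (mem_pIdeal.1 hjI))))))).symm
  have h2 : pIdeal i = insert i ((pIdeal (ι := ι) i).erase i) := by
    rw [Finset.insert_erase (mem_pIdeal.2 (le_refl i))]
  rw [h1, h2, Finset.sum_insert (Finset.notMem_erase i _)]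
  congr 1
  · refine gfun_of_not_above ?_
    rintro ⟨j, hj1, hj2⟩
    exact hj2 (hnoab j hj1)
  · have hcon : ∀ m ∈ (pIdeal (ι := ι) i).erase i, gfun w u m = Mw w := by
      intro m hm
      obtain ⟨h4, h3⟩ := Finset.mem_erase.1 hm
      exact gfun_of_above ⟨i, lt_of_le_of_ne (mem_pIdeal.1 h3) h4, hi⟩
    rw [Finset.sum_congr rfl hcon, Finset.sum_const, smul_eq_mul,
      Finset.erase_insert (Finset.notMem_erase i _)]

lemma sum_eq_card_mul {S : Finset ι} {h : ι → ℕ} {C : ℕ}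
    (hle : ∀ l ∈ S, h l ≤ C) (he : ∑ l ∈ S, h l = S.card * C) :
    ∀ l ∈ S, h l = C := by
  intro l hl
  by_contra hc
  have hlt : h l < C := lt_of_le_of_ne (hle l hl) hc
  have : ∑ l ∈ S, h l < ∑ _l ∈ S, C := Finset.sum_lt_sum hle ⟨l, hl, hlt⟩
  rw [Finset.sum_const, smul_eq_mul] at this
  omega

end Aux3
section Aux4
variable [Fintype ι] [PartialOrder ι] [Field F] [Fintype F] {k : ι → ℕ} {w : F → ℕ}

lemma Wblk_congr {u u' : ∀ i, Fin (k i) → F} {m : ι} (h : u m = u' m) :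
    Wblk w u m = Wblk w u' m := by rw [Wblk, Wblk, h]

lemma suppB_neg {u : ∀ i, Fin (k i) → F} : suppB (-u) = suppB u := by
  ext m
  simp [mem_suppB]

lemma fB_le_Mw {κ : ℕ} (v : Fin κ → F) : Finset.univ.sup (fun j => w (v j)) ≤ Mw w :=
  Finset.sup_le fun j _ => le_Mw _

lemma AC (hw0 : ∀ b : F, w b = 0 ↔ b = 0)
    {K : Finset ι} (hK : DC K) {κ : ℕ} (hκ : 0 < κ)
    (G : (Fin κ → F) →ₗ[F] (∀ i, Fin (k i) → F))
    (hG0 : ∀ v m, m ∈ K → G v m = 0)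
    (hGinj : ∀ v, G v = 0 → v = 0)
    (hGw : ∀ v, v ≠ 0 →
      ∑ m ∈ Finset.univ \ K, gfun w (G v) m = Finset.univ.sup (fun j => w (v j))) :
    ∃ μ, μ ∉ K ∧ (∀ m, m < μ → m ∈ K) ∧ (∀ v m, m ≠ μ → G v m = 0) ∧
      (∀ v, v ≠ 0 → Wblk w (G v) μ = Finset.univ.sup (fun j => w (v j))) := by
  have hmwpos := mw_pos hw0
  -- step a
  have step_a : ∀ v : Fin κ → F, v ≠ 0 → ∀ m, G v m ≠ 0 → ∀ m', m' < m → m' ∈ K := by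
    intro v hv m hm m' hlt
    by_contra hc
    have hmK : m ∉ K := fun h => hm (hG0 v m h)
    have hsub : ({m', m} : Finset ι) ⊆ Finset.univ \ K := by
      intro x hx
      rw [Finset.mem_insert, Finset.mem_singleton] at hx
      rcases hx with rfl | rfl <;> simp [hc, hmK]
    have hpair : ∑ x ∈ ({m', m} : Finset ι), gfun w (G v) x
        = gfun w (G v) m' + gfun w (G v) m :=
      Finset.sum_pair (ne_of_lt hlt)
    have hsum : ∑ x ∈ ({m', m} : Finset ι), gfun w (G v) x
        ≤ ∑ x ∈ Finset.univ \ K, gfun w (G v) x :=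
      Finset.sum_le_sum_of_subset hsub
    have h1 : gfun w (G v) m' = Mw w := gfun_of_above ⟨m, hlt, hm⟩
    have h2 : mw w ≤ gfun w (G v) m := mw_le_gfun hw0 hm
    have h3 := fB_le_Mw (w := w) v
    rw [hGw v hv] at hsum
    omega
  -- step b
  have step_b : ∀ v : Fin κ → F, v ≠ 0 →
      ∑ m ∈ suppB (G v), Wblk w (G v) m = Finset.univ.sup (fun j => w (v j)) := by
    intro v hv
    have h1 : ∀ m ∈ Finset.univ \ K, gfun w (G v) m = Wblk w (G v) m := by
      intro m hm
      rw [Finset.mem_sdiff] at hm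
      refine gfun_of_not_above ?_
      rintro ⟨j, hj1, hj2⟩
      exact hm.2 (step_a v hv j hj2 m hj1)
    have h2 : suppB (G v) ⊆ Finset.univ \ K := by
      intro m hm
      rw [mem_suppB] at hm
      rw [Finset.mem_sdiff]
      exact ⟨Finset.mem_univ m, fun h => hm (hG0 v m h)⟩
    rw [← hGw v hv, Finset.sum_congr rfl h1]
    refine Finset.sum_subset h2 (fun m _ hm => ?_)
    rw [mem_suppB, not_not] at hm
    exact (Wblk_eq_zero_iff hw0).2 hm
  -- step c
  have step_c : ∀ v : Fin κ → F, v ≠ 0 → Finset.univ.sup (fun j => w (v j)) < 2 * mw w →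
      ∃ μ', suppB (G v) = {μ'} := by
    intro v hv hlt
    have hGv : G v ≠ 0 := fun h => hv (hGinj v h)
    have hne : (suppB (G v)).Nonempty := by
      by_contra hc
      rw [Finset.not_nonempty_iff_eq_empty] at hc
      refine hGv (funext fun m => ?_)
      by_contra hm
      have : m ∈ suppB (G v) := mem_suppB.2 hm
      rw [hc] at this
      exact absurd this (Finset.notMem_empty m)
    obtain ⟨m₁, hm₁⟩ := hne
    refine ⟨m₁, ?_⟩
    have hcard : suppB (G v) ⊆ {m₁} := by
      intro m₂ hm₂
      rw [Finset.mem_singleton]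
      by_contra hne2
      have hsub : ({m₂, m₁} : Finset ι) ⊆ suppB (G v) := by
        intro x hx
        rw [Finset.mem_insert, Finset.mem_singleton] at hx
        rcases hx with rfl | rfl <;> assumption
      have hs : ∑ x ∈ ({m₂, m₁} : Finset ι), Wblk w (G v) x
          ≤ ∑ x ∈ suppB (G v), Wblk w (G v) x :=
        Finset.sum_le_sum_of_subset hsub
      rw [Finset.sum_pair hne2, step_b v hv] at hs
      have w1 : mw w ≤ Wblk w (G v) m₂ := mw_le_Wblk hw0 (mem_suppB.1 hm₂)
      have w2 : mw w ≤ Wblk w (G v) m₁ := mw_le_Wblk hw0 (mem_suppB.1 hm₁)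
      omega
    exact Finset.Subset.antisymm hcard (Finset.singleton_subset_iff.2 hm₁)
  -- step d
  have step_d : ∀ (v v' : Fin κ → F) (m m' : ι), v ≠ 0 → v' ≠ 0 →
      suppB (G v) = {m} → suppB (G v') = {m'} → m ≠ m' →
      2 * mw w ≤ Finset.univ.sup (fun j => w ((v + v') j)) := by
    intro v v' m m' hv hv' hsv hsv' hne
    have hvm : G v m ≠ 0 := mem_suppB.1 (hsv ▸ Finset.mem_singleton_self m)
    have hv'm : G v' m' ≠ 0 := mem_suppB.1 (hsv' ▸ Finset.mem_singleton_self m')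
    have hvz : ∀ x, x ≠ m → G v x = 0 := by
      intro x hx
      by_contra hc
      have := mem_suppB.2 hc
      rw [hsv, Finset.mem_singleton] at this
      exact hx this
    have hv'z : ∀ x, x ≠ m' → G v' x = 0 := by
      intro x hx
      by_contra hc
      have := mem_suppB.2 hc
      rw [hsv', Finset.mem_singleton] at this
      exact hx this
    have hvv' : v + v' ≠ 0 := by
      intro h
      have hv2 : v' = -v := eq_neg_of_add_eq_zero_right h
      rw [hv2, map_neg, suppB_neg, hsv] at hsv'
      rw [Finset.singleton_inj] at hsv'
      exact hne hsv'
    have hadd : ∀ x, G (v + v') x = G v x + G v' x := by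
      intro x
      rw [map_add]
      rfl
    have hsupp : suppB (G (v + v')) = {m, m'} := by
      ext x
      rw [mem_suppB, hadd, Finset.mem_insert, Finset.mem_singleton]
      constructor
      · intro hx
        by_contra hcon
        push_neg at hcon
        rw [hvz x hcon.1, hv'z x hcon.2, add_zero] at hx
        exact hx rfl
      · rintro (rfl | rfl)
        · rw [hv'z x hne, add_zero]; exact hvm
        · rw [hvz x (Ne.symm hne), zero_add]; exact hv'm
    have := step_b (v + v') hvv'
    rw [hsupp, Finset.sum_pair hne] at this
    have e1 : Wblk w (G (v + v')) m = Wblk w (G v) m :=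
      Wblk_congr (by rw [hadd, hv'z m hne, add_zero])
    have e2 : Wblk w (G (v + v')) m' = Wblk w (G v') m' :=
      Wblk_congr (by rw [hadd, hvz m' (Ne.symm hne), zero_add])
    rw [e1, e2] at this
    have w1 : mw w ≤ Wblk w (G v) m := mw_le_Wblk hw0 hvm
    have w2 : mw w ≤ Wblk w (G v') m' := mw_le_Wblk hw0 hv'm
    omega
  -- the special element a₀
  obtain ⟨a₀, ha₀, ha₀w⟩ := mw_achieved (w := w)
  have hsingle_ne : ∀ j : Fin κ, (Pi.single (M := fun _ : Fin κ => F) j a₀) ≠ 0 := by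
    intro j h
    have := congrFun h j
    rw [Pi.single_eq_same] at this
    exact ha₀ this
  have hsingle_fB : ∀ j : Fin κ, Finset.univ.sup (fun l => w ((Pi.single (M := fun _ : Fin κ => F) j a₀) l)) = mw w := by
    intro j
    refine le_antisymm (Finset.sup_le fun l _ => ?_) ?_
    · rw [show (Pi.single (M := fun _ : Fin κ => F) j a₀) l = if l = j then a₀ else 0 from
        Pi.single_apply j a₀ l]
      split
      · rw [ha₀w]
      · rw [(hw0 0).2 rfl]; exact Nat.zero_le _
    · calc mw w = w ((Pi.single (M := fun _ : Fin κ => F) j a₀) j) := by rw [Pi.single_eq_same, ha₀w]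
        _ ≤ _ := Finset.le_sup (f := fun l => w ((Pi.single (M := fun _ : Fin κ => F) j a₀) l)) (Finset.mem_univ j)
  have hμf : ∀ j : Fin κ, ∃ μ', suppB (G ((Pi.single (M := fun _ : Fin κ => F) j a₀))) = {μ'} := by
    intro j
    refine step_c _ (hsingle_ne j) ?_
    rw [hsingle_fB j]
    omega
  choose μf hμfs using hμf
  -- all μf equal
  have hμeq : ∀ j l : Fin κ, μf j = μf l := by
    have key : ∀ j l : Fin κ, j ≠ l → ∀ μz : ι,
        suppB (G ((Pi.single (M := fun _ : Fin κ => F) j a₀) + (Pi.single (M := fun _ : Fin κ => F) l a₀))) = {μz} → μz = μf j := by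
      intro j l hjl μz hz
      by_contra hne
      have hd := step_d _ _ _ _ ?_ (neg_ne_zero.2 (hsingle_ne j)) hz
        (by rw [map_neg, suppB_neg]; exact hμfs j) hne
      · have he : (Pi.single (M := fun _ : Fin κ => F) j a₀) + (Pi.single (M := fun _ : Fin κ => F) l a₀) + -(Pi.single (M := fun _ : Fin κ => F) j a₀) = (Pi.single (M := fun _ : Fin κ => F) l a₀) := by abel
        rw [he, hsingle_fB l] at hd
        omega
      · intro h
        have := congrFun h j
        rw [Pi.add_apply, Pi.single_eq_same, Pi.single_eq_of_ne hjl, add_zero] at this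
        exact ha₀ this
    intro j l
    by_cases hjl : j = l
    · rw [hjl]
    · have hzne : ((Pi.single (M := fun _ : Fin κ => F) j a₀) + (Pi.single (M := fun _ : Fin κ => F) l a₀)) ≠ 0 := by
        intro h
        have := congrFun h j
        rw [Pi.add_apply, Pi.single_eq_same, Pi.single_eq_of_ne hjl, add_zero] at this
        exact ha₀ this
      have hzfB : Finset.univ.sup
          (fun c => w (((Pi.single (M := fun _ : Fin κ => F) j a₀) + (Pi.single (M := fun _ : Fin κ => F) l a₀)) c)) < 2 * mw w := by
        have : ∀ c, w (((Pi.single (M := fun _ : Fin κ => F) j a₀) + (Pi.single (M := fun _ : Fin κ => F) l a₀)) c) ≤ mw w := by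
          intro c
          rw [Pi.add_apply,
            show (Pi.single (M := fun _ : Fin κ => F) j a₀) c = if c = j then a₀ else 0 from
              Pi.single_apply j a₀ c,
            show ((Pi.single (M := fun _ : Fin κ => F) l a₀) : Fin κ → F) c = if c = l then a₀ else 0 from
              Pi.single_apply l a₀ c]
          by_cases h1 : c = j
          · rw [if_pos h1, if_neg (h1 ▸ hjl), add_zero, ha₀w]
          · rw [if_neg h1, zero_add]
            split
            · rw [ha₀w]
            · rw [(hw0 0).2 rfl]; exact Nat.zero_le _
        refine lt_of_le_of_lt (Finset.sup_le fun c _ => this c) ?_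
        omega
      obtain ⟨μz, hμz⟩ := step_c _ hzne hzfB
      have e1 : μz = μf j := key j l hjl μz hμz
      have e2 : μz = μf l := by
        refine key l j (Ne.symm hjl) μz ?_
        rwa [add_comm] at hμz
      rw [← e1, e2]
  set μ := μf ⟨0, hκ⟩ with hμdef
  have hμK : μ ∉ K := by
    intro h
    have : G ((Pi.single (M := fun _ : Fin κ => F) (⟨0, hκ⟩ : Fin κ) a₀)) μ ≠ 0 :=
      mem_suppB.1 ((hμfs ⟨0, hκ⟩) ▸ Finset.mem_singleton_self μ)
    exact this (hG0 _ _ h)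
  have hbelow : ∀ m, m < μ → m ∈ K := by
    intro m hm
    refine step_a _ (hsingle_ne ⟨0, hκ⟩) μ ?_ m hm
    exact mem_suppB.1 ((hμfs ⟨0, hκ⟩) ▸ Finset.mem_singleton_self μ)
  have hsingle_supp : ∀ (j : Fin κ) (m : ι), m ≠ μ → G ((Pi.single (M := fun _ : Fin κ => F) j a₀)) m = 0 := by
    intro j m hm
    by_contra hc
    have := mem_suppB.2 hc
    rw [hμfs j, Finset.mem_singleton] at this
    rw [hμeq j ⟨0, hκ⟩] at this
    exact hm this
  have hsupp : ∀ (v : Fin κ → F) (m : ι), m ≠ μ → G v m = 0 := by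
    intro v m hm
    have hrep : v = ∑ j, (v j * a₀⁻¹) • (Pi.single (M := fun _ : Fin κ => F) j a₀) := by
      funext l
      rw [Finset.sum_apply]
      have : ∀ j, ((v j * a₀⁻¹) • (Pi.single (M := fun _ : Fin κ => F) j a₀)) l
          = if l = j then v j * a₀⁻¹ * a₀ else 0 := by
        intro j
        rw [Pi.smul_apply,
          show (Pi.single (M := fun _ : Fin κ => F) j a₀) l = if l = j then a₀ else 0 from
            Pi.single_apply j a₀ l, smul_eq_mul]
        split <;> simp
      rw [Finset.sum_congr rfl fun j _ => this j, Finset.sum_ite_eq Finset.univ l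
        (fun j => v j * a₀⁻¹ * a₀)]
      rw [if_pos (Finset.mem_univ l)]
      field_simp
    rw [hrep, map_sum]
    rw [Finset.sum_apply]
    refine Finset.sum_eq_zero fun j _ => ?_
    rw [map_smul]
    have : (G ((Pi.single (M := fun _ : Fin κ => F) j a₀))) m = 0 := hsingle_supp j m hm
    rw [Pi.smul_apply, this, smul_zero]
  refine ⟨μ, hμK, hbelow, hsupp, fun v hv => ?_⟩
  have hGv : G v ≠ 0 := fun h => hv (hGinj v h)
  have hsub : suppB (G v) = {μ} := by
    have h1 : suppB (G v) ⊆ {μ} := by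
      intro m hm
      rw [Finset.mem_singleton]
      by_contra hc
      exact (mem_suppB.1 hm) (hsupp v m hc)
    have h2 : (suppB (G v)).Nonempty := by
      by_contra hc
      rw [Finset.not_nonempty_iff_eq_empty] at hc
      refine hGv (funext fun m => ?_)
      by_contra hm
      have := mem_suppB.2 hm
      rw [hc] at this
      exact absurd this (Finset.notMem_empty m)
    obtain ⟨x, hx⟩ := h2
    have := h1 hx
    rw [Finset.mem_singleton] at this
    subst this
    exact Finset.Subset.antisymm h1 (Finset.singleton_subset_iff.2 hx)
  have := step_b v hv
  rw [hsub, Finset.sum_singleton] at this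
  exact this

end Aux4
section Aux5
variable [Fintype ι] [PartialOrder ι] [Field F] [Fintype F] {k : ι → ℕ} {w : F → ℕ}

lemma SIn_neg {u : ∀ i, Fin (k i) → F} {S : Finset ι} (h : SIn u S) : SIn (-u) S := by
  intro m hm
  have := h m hm
  funext j
  simp [this]

lemma SIn_add {u u' : ∀ i, Fin (k i) → F} {S : Finset ι} (h : SIn u S) (h' : SIn u' S) :
    SIn (u + u') S := by
  intro m hm
  rw [Pi.add_apply, h m hm, h' m hm, add_zero]

lemma Lprime (hk : ∀ i, 0 < k i) (hw0 : ∀ b : F, w b = 0 ↔ b = 0)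
    (T T' : (∀ i, Fin (k i) → F) →ₗ[F] (∀ i, Fin (k i) → F))
    (hT : ∀ u, omegaW w (T u) = omegaW w u)
    (hT' : ∀ u, omegaW w (T' u) = omegaW w u)
    (hTT' : ∀ u, T (T' u) = u) (hT'T : ∀ u, T' (T u) = u)
    (i : ι)
    (ih : ∀ j, j < i → ∃ ν, (pIdeal ν).card = (pIdeal j).card ∧
      (∀ u, SIn u (pIdeal j) → SIn (T u) (pIdeal ν)) ∧
      (∀ u, SIn u (pIdeal ν) → SIn (T' u) (pIdeal j))) :
    ∃ μ, (pIdeal μ).card = (pIdeal i).card ∧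
      (∀ u, SIn u (pIdeal i) → SIn (T u) (pIdeal μ)) := by
  have hMwpos := Mw_pos (w := w) hw0
  have hmwpos := mw_pos (w := w) hw0
  -- totalize the induction hypothesis
  have ih' : ∀ j : ι, ∃ ν, j < i →
      ((∀ u, SIn u (pIdeal j) → SIn (T u) (pIdeal ν)) ∧
       (∀ u, SIn u (pIdeal ν) → SIn (T' u) (pIdeal j))) := by
    intro j
    by_cases hj : j < i
    · obtain ⟨ν, _, h2, h3⟩ := ih j hj
      exact ⟨ν, fun _ => ⟨h2, h3⟩⟩
    · exact ⟨i, fun hc => absurd hc hj⟩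
  choose νf hνf using ih'
  set Im : Finset ι := (pIdeal i).erase i with hImdef
  have mem_Im : ∀ {j : ι}, j ∈ Im ↔ j < i := by
    intro j
    rw [hImdef, Finset.mem_erase, mem_pIdeal]
    constructor
    · rintro ⟨h1, h2⟩; exact lt_of_le_of_ne h2 h1
    · intro h; exact ⟨ne_of_lt h, le_of_lt h⟩
  have hImdc : DC Im := by
    intro a b hab hb
    exact mem_Im.2 (lt_of_le_of_lt hab (mem_Im.1 hb))
  set K : Finset ι := Im.biUnion (fun j => pIdeal (νf j)) with hKdef
  have mem_K : ∀ {l : ι}, l ∈ K ↔ ∃ j, j < i ∧ l ≤ νf j := by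
    intro l
    rw [hKdef, Finset.mem_biUnion]
    constructor
    · rintro ⟨j, hj, hl⟩; exact ⟨j, mem_Im.1 hj, mem_pIdeal.1 hl⟩
    · rintro ⟨j, hj, hl⟩; exact ⟨j, mem_Im.2 hj, mem_pIdeal.2 hl⟩
  have hKdc : DC K := by
    intro a b hab hb
    obtain ⟨j, hj, hl⟩ := mem_K.1 hb
    exact mem_K.2 ⟨j, hj, le_trans hab hl⟩
  -- images of vectors supported below i land in K, and conversely
  have hTK : ∀ u, SIn u Im → SIn (T u) K := by
    intro u hu
    rw [← Finset.univ_sum_single u, map_sum]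
    refine SIn_sum (fun j _ => ?_)
    by_cases hj : j < i
    · refine SIn_mono ?_ ((hνf j hj).1 (Pi.single j (u j)) (SIn_single (mem_pIdeal.2 le_rfl)))
      intro l hl
      exact mem_K.2 ⟨j, hj, mem_pIdeal.1 hl⟩
    · have : u j = 0 := hu j (fun h => hj (mem_Im.1 h))
      rw [this, Pi.single_zero, map_zero]
      exact fun m _ => rfl
  have hT'K : ∀ u, SIn u K → SIn (T' u) Im := by
    intro u hu
    rw [← Finset.univ_sum_single u, map_sum]
    refine SIn_sum (fun l _ => ?_)
    by_cases hl : l ∈ K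
    · obtain ⟨j, hj, hle⟩ := mem_K.1 hl
      refine SIn_mono ?_ ((hνf j hj).2 (Pi.single l (u l)) (SIn_single (mem_pIdeal.2 hle)))
      intro x hx
      exact mem_Im.2 (lt_of_le_of_lt (mem_pIdeal.1 hx) hj)
    · have : u l = 0 := hu l hl
      rw [this, Pi.single_zero, map_zero]
      exact fun m _ => rfl
  obtain ⟨a₁, ha₁ne, ha₁⟩ := Mw_achieved (w := w) hw0
  -- the cardinality of K
  have cardK : K.card = Im.card := by
    have le1 : K.card ≤ Im.card := by
      have h1 : SIn (T' (fillV k K a₁)) Im := hT'K _ fillV_SIn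
      have h2 : omegaW w (T' (fillV k K a₁)) = K.card * Mw w := by
        rw [← hT (T' (fillV k K a₁)), hTT', omega_fillV hk hKdc hw0 ha₁]
      have h3 := omegaW_le_card hw0 hImdc h1
      rw [h2] at h3
      exact Nat.le_of_mul_le_mul_right h3 hMwpos
    have le2 : Im.card ≤ K.card := by
      have h1 : SIn (T (fillV k Im a₁)) K := hTK _ fillV_SIn
      have h2 : omegaW w (T (fillV k Im a₁)) = Im.card * Mw w := by
        rw [hT, omega_fillV hk hImdc hw0 ha₁]
      have h3 := omegaW_le_card hw0 hKdc h1
      rw [h2] at h3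
      exact Nat.le_of_mul_le_mul_right h3 hMwpos
    omega
  -- the cut-off linear map
  set cutL : (∀ i, Fin (k i) → F) →ₗ[F] (∀ i, Fin (k i) → F) :=
    { toFun := fun u m => if m ∈ K then 0 else u m
      map_add' := by intro a b; funext m; by_cases h : m ∈ K <;> simp [h]
      map_smul' := by intro c a; funext m; by_cases h : m ∈ K <;> simp [h] }
    with hcutdef
  have cut_apply : ∀ u m, cutL u m = if m ∈ K then 0 else u m := fun u m => rfl
  set G : (Fin (k i) → F) →ₗ[F] (∀ i, Fin (k i) → F) :=
    cutL ∘ₗ T ∘ₗ LinearMap.single F (fun i => Fin (k i) → F) i with hGdef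
  have hGapp : ∀ v, G v = cutL (T (Pi.single i v)) := fun v => rfl
  -- the starred weight identity
  have star : ∀ v : Fin (k i) → F, v ≠ 0 →
      ∑ m ∈ Finset.univ \ K, gfun w (G v) m = Finset.univ.sup (fun j => w (v j)) := by
    intro v hv
    set z : ∀ i, Fin (k i) → F :=
      fun m => if m ∈ K then fillV k K a₁ m else T (Pi.single i v) m with hzdef
    have hy : SIn (z - T (Pi.single i v)) K := by
      intro m hm
      rw [Pi.sub_apply, hzdef]
      simp only [if_neg hm]
      rw [sub_self]
    set x : ∀ i, Fin (k i) → F := T' (z - T (Pi.single i v)) with hxdef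
    have hxIm : SIn x Im := hT'K _ hy
    have hxi : x i = 0 := hxIm i (fun h => absurd (mem_Im.1 h) (lt_irrefl i))
    set u' : ∀ i, Fin (k i) → F := Pi.single i v + x with hu'def
    have hu'supp : SIn u' (pIdeal i) := by
      refine SIn_add (SIn_single (mem_pIdeal.2 le_rfl)) (SIn_mono ?_ hxIm)
      exact fun l hl => Finset.mem_of_mem_erase hl
    have hu'i : u' i = v := by
      rw [hu'def, Pi.add_apply, Pi.single_eq_same, hxi, add_zero]
    have hu'ine : u' i ≠ 0 := by rw [hu'i]; exact hv
    have hTu' : T u' = z := by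
      rw [hu'def, map_add, hxdef, hTT']
      abel
    have hωz : omegaW w z = Finset.univ.sup (fun j => w (v j)) + Im.card * Mw w := by
      rw [← hTu', hT, omega_cone hw0 hu'supp hu'ine]
      congr 1
      rw [Wblk, hu'i]
    have hsplit : ∑ m ∈ Finset.univ \ K, gfun w z m + ∑ m ∈ K, gfun w z m
        = omegaW w z := by
      rw [omegaW_eq_sum hw0]
      exact Finset.sum_sdiff (Finset.subset_univ K)
    have hKsum : ∑ m ∈ K, gfun w z m = Im.card * Mw w := by
      have : ∀ m ∈ K, gfun w z m = Mw w := by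
        intro m hm
        rw [gfun]
        split
        · rfl
        · have hzm : z m = fillV k K a₁ m := by rw [hzdef]; exact if_pos hm
          rw [Wblk_congr hzm]
          exact Wblk_fillV hk hm hw0 ha₁
      rw [Finset.sum_congr rfl this, Finset.sum_const, smul_eq_mul, cardK]
    have hcongr : ∑ m ∈ Finset.univ \ K, gfun w z m
        = ∑ m ∈ Finset.univ \ K, gfun w (G v) m := by
      refine Finset.sum_congr rfl (fun m hm => ?_)
      rw [Finset.mem_sdiff] at hm
      refine gfun_congr (fun j hj => ?_)
      have hjK : j ∉ K := fun h => hm.2 (hKdc hj h)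
      rw [hzdef, hGapp, cut_apply]
      simp only [if_neg hjK]
    rw [hcongr, hKsum, hωz] at hsplit
    omega
  -- apply the antichain lemma
  have hG0 : ∀ v m, m ∈ K → G v m = 0 := by
    intro v m hm
    rw [hGapp, cut_apply, if_pos hm]
  have hGinj : ∀ v, G v = 0 → v = 0 := by
    intro v hv
    have h1 : SIn (T (Pi.single i v)) K := by
      intro m hm
      have := congrFun hv m
      rw [hGapp, cut_apply, if_neg hm] at this
      exact this
    have h2 : SIn (Pi.single i v) Im := by
      have := hT'K _ h1
      rwa [hT'T] at this
    have h3 := h2 i (fun h => absurd (mem_Im.1 h) (lt_irrefl i))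
    rwa [Pi.single_eq_same] at h3
  obtain ⟨μ, hμK, hbelow, hμsupp, hμWblk⟩ := AC hw0 hKdc (hk i) G hG0 hGinj star
  -- supports of images of block-i vectors
  have hTi_supp : ∀ v : Fin (k i) → F, SIn (T (Pi.single i v)) (insert μ K) := by
    intro v m hm
    rw [Finset.mem_insert] at hm
    push_neg at hm
    have := hμsupp v m hm.1
    rwa [hGapp, cut_apply, if_neg hm.2] at this
  -- K is contained in the principal ideal of μ
  have hKsub : K ⊆ pIdeal μ := by
    by_contra hc
    rw [Finset.not_subset] at hc
    have hBne : (K \ pIdeal μ).Nonempty := by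
      obtain ⟨l, hl1, hl2⟩ := hc
      exact ⟨l, Finset.mem_sdiff.2 ⟨hl1, hl2⟩⟩
    set v₀ : Fin (k i) → F := Pi.single (⟨0, hk i⟩ : Fin (k i)) 1 with hv₀def
    have hv₀ : v₀ ≠ 0 := by
      intro h
      have := congrFun h ⟨0, hk i⟩
      rw [hv₀def, Pi.single_eq_same] at this
      exact one_ne_zero this
    set u : ∀ i, Fin (k i) → F := T (Pi.single i v₀) with hudef
    set f : ℕ := Finset.univ.sup (fun j => w (v₀ j)) with hfdef
    have husupp : SIn u (insert μ K) := hTi_supp v₀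
    have hsingle_supp : SIn (Pi.single i v₀) (pIdeal i) := SIn_single (mem_pIdeal.2 le_rfl)
    have hsingle_i : (Pi.single i v₀ : ∀ i, Fin (k i) → F) i = v₀ :=
      Pi.single_eq_same (M := fun i => Fin (k i) → F) i v₀
    have hωu : omegaW w u = f + Im.card * Mw w := by
      rw [hudef, hT, omega_cone hw0 hsingle_supp (by rw [hsingle_i]; exact hv₀)]
      congr 1
      rw [Wblk, hsingle_i]
    have huμ : u μ = G v₀ μ := by
      rw [hGapp, cut_apply, if_neg hμK, hudef]
    have hWμ : Wblk w u μ = f := by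
      rw [Wblk_congr huμ]
      exact hμWblk v₀ hv₀
    have hnoaboveμ : ∀ j, μ < j → u j = 0 := by
      intro j hj
      refine husupp j (fun h => ?_)
      rw [Finset.mem_insert] at h
      rcases h with rfl | h
      · exact lt_irrefl j hj
      · exact hμK (hKdc (le_of_lt hj) h)
    have hgμ : gfun w u μ = f := by
      rw [gfun_of_not_above (by rintro ⟨j, hj1, hj2⟩; exact hj2 (hnoaboveμ j hj1))]
      exact hWμ
    have hrest : ∀ m, m ∉ K → m ≠ μ → gfun w u m = 0 := by
      intro m hmK hmμ
      refine gfun_eq_zero hw0 (fun j hj => ?_)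
      refine husupp j (fun h => ?_)
      rw [Finset.mem_insert] at h
      rcases h with rfl | h
      · rcases eq_or_lt_of_le hj with rfl | hlt
        · exact hmμ rfl
        · exact hmK (hbelow m hlt)
      · exact hmK (hKdc hj h)
    have hsumK : ∑ l ∈ K, gfun w u l = K.card * Mw w := by
      have hsplit : ∑ m ∈ Finset.univ \ K, gfun w u m + ∑ m ∈ K, gfun w u m
          = omegaW w u := by
        rw [omegaW_eq_sum hw0]
        exact Finset.sum_sdiff (Finset.subset_univ K)
      have houts : ∑ m ∈ Finset.univ \ K, gfun w u m = f := by
        rw [Finset.sum_eq_single_of_mem μ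
          (Finset.mem_sdiff.2 ⟨Finset.mem_univ μ, hμK⟩)
          (fun m hm hne => hrest m (Finset.mem_sdiff.1 hm).2 hne)]
        exact hgμ
      rw [houts, hωu] at hsplit
      rw [← cardK] at hsplit
      omega
    have hallMw : ∀ l ∈ K, gfun w u l = Mw w :=
      sum_eq_card_mul (fun l _ => gfun_le) hsumK
    obtain ⟨l, hlB, hlmax⟩ : ∃ l ∈ K \ pIdeal μ, ∀ x ∈ K \ pIdeal μ, ¬ l < x := by
      obtain ⟨l, hl⟩ := Finset.exists_maximal hBne
      exact ⟨l, hl.1, fun x hx hlt => (not_le_of_gt hlt) (hl.2 hx hlt.le)⟩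
    have hlK : l ∈ K := (Finset.mem_sdiff.1 hlB).1
    have hlnotμ : ¬ l ≤ μ := fun h => (Finset.mem_sdiff.1 hlB).2 (mem_pIdeal.2 h)
    have hc1 : ∀ j, l < j → u j = 0 := by
      intro j hj
      refine husupp j (fun h => ?_)
      rw [Finset.mem_insert] at h
      rcases h with rfl | h
      · exact hlnotμ (le_of_lt hj)
      · by_cases hjμ : j ≤ μ
        · exact hlnotμ (le_trans (le_of_lt hj) hjμ)
        · exact hlmax j (Finset.mem_sdiff.2 ⟨h, fun hh => hjμ (mem_pIdeal.1 hh)⟩) hj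
    have hWl : Wblk w u l = Mw w := by
      have := hallMw l hlK
      rwa [gfun_of_not_above (by rintro ⟨j, hj1, hj2⟩; exact hj2 (hc1 j hj1))] at this
    have hul : u l ≠ 0 := by
      intro h
      rw [(Wblk_eq_zero_iff hw0).2 h] at hWl
      omega
    -- cancel the block l
    set y₂ : ∀ i, Fin (k i) → F := Pi.single l (u l) with hy₂def
    have hy₂K : SIn y₂ K := SIn_single hlK
    set x₂ : ∀ i, Fin (k i) → F := T' (-y₂) with hx₂def
    have hx₂Im : SIn x₂ Im := hT'K _ (SIn_neg hy₂K)
    set u₂ : ∀ i, Fin (k i) → F := Pi.single i v₀ + x₂ with hu₂def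
    have hu₂supp : SIn u₂ (pIdeal i) :=
      SIn_add hsingle_supp (SIn_mono (fun l' hl' => Finset.mem_of_mem_erase hl') hx₂Im)
    have hx₂i : x₂ i = 0 := hx₂Im i (fun h => absurd (mem_Im.1 h) (lt_irrefl i))
    have hu₂i : u₂ i = v₀ := by
      rw [hu₂def, Pi.add_apply, hsingle_i, hx₂i, add_zero]
    have hTu₂ : T u₂ = u - y₂ := by
      rw [hu₂def, map_add, hx₂def, hTT', hudef]
      abel
    set z : ∀ i, Fin (k i) → F := u - y₂ with hzdef
    have hωz : omegaW w z = f + Im.card * Mw w := by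
      rw [← hTu₂, hT, omega_cone hw0 hu₂supp (by rw [hu₂i]; exact hv₀)]
      congr 1
      rw [Wblk, hu₂i]
    have hzl : z l = 0 := by
      rw [hzdef, Pi.sub_apply, hy₂def, Pi.single_eq_same, sub_self]
    have hzother : ∀ m, m ≠ l → z m = u m := by
      intro m hm
      rw [hzdef, Pi.sub_apply, hy₂def, Pi.single_eq_of_ne hm, sub_zero]
    have hz_above : ∀ j, μ < j → z j = 0 := by
      intro j hj
      by_cases hjl : j = l
      · rw [hjl]; exact hzl
      · rw [hzother j hjl]; exact hnoaboveμ j hj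
    have hωz_le : omegaW w z ≤ f + (K.erase l).card * Mw w := by
      rw [omegaW_eq_sum hw0]
      have hout : ∀ m ∈ Finset.univ, m ∉ insert μ (K.erase l) → gfun w z m = 0 := by
        intro m _ hm
        rw [Finset.mem_insert, Finset.mem_erase] at hm
        push_neg at hm
        by_cases hml : m = l
        · subst hml
          refine gfun_eq_zero hw0 (fun j hj => ?_)
          rcases eq_or_lt_of_le hj with rfl | hlt
          · exact hzl
          · rw [hzother j (ne_of_gt hlt)]
            exact hc1 j hlt
        · have hmK : m ∉ K := fun h => (hm.2 hml) h
          refine gfun_eq_zero hw0 (fun j hj => ?_)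
          by_cases hjl : j = l
          · rw [hjl]; exact hzl
          · rw [hzother j hjl]
            refine husupp j (fun h => ?_)
            rw [Finset.mem_insert] at h
            rcases h with rfl | h
            · rcases eq_or_lt_of_le hj with rfl | hlt
              · exact hm.1 rfl
              · exact hmK (hbelow m hlt)
            · exact hmK (hKdc hj h)
      rw [← Finset.sum_subset (Finset.subset_univ (insert μ (K.erase l))) hout]
      have hμer : μ ∉ K.erase l := fun h => hμK (Finset.mem_of_mem_erase h)
      rw [Finset.sum_insert hμer]
      have hgzμ : gfun w z μ = f := by
        rw [gfun_of_not_above (by rintro ⟨j, hj1, hj2⟩; exact hj2 (hz_above j hj1))]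
        rw [Wblk_congr (hzother μ (fun h => hlnotμ (le_of_eq h.symm)))]
        exact hWμ
      rw [hgzμ]
      exact Nat.add_le_add_left
        (Finset.sum_le_card_nsmul _ _ _ (fun m _ => gfun_le)) f
    have hKcard_pos : 1 ≤ K.card := Finset.card_pos.2 ⟨l, hlK⟩
    have hercard : (K.erase l).card = K.card - 1 := Finset.card_erase_of_mem hlK
    rw [hωz, hercard, ← cardK] at hωz_le
    have hlt : (K.card - 1) * Mw w < K.card * Mw w :=
      Nat.mul_lt_mul_of_lt_of_le (by omega) (le_refl _) hMwpos
    omega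
  -- the principal ideal of μ
  have hpId : pIdeal μ = insert μ K := by
    ext x
    rw [mem_pIdeal, Finset.mem_insert]
    constructor
    · intro h
      rcases eq_or_lt_of_le h with rfl | hlt
      · exact Or.inl rfl
      · exact Or.inr (hbelow x hlt)
    · rintro (rfl | h)
      · exact le_refl x
      · exact mem_pIdeal.1 (hKsub h)
  have hcard : (pIdeal μ).card = (pIdeal i).card := by
    rw [hpId, Finset.card_insert_of_notMem hμK, cardK]
    have h9 := Finset.card_erase_add_one (mem_pIdeal.2 (le_refl i))
    rw [← hImdef] at h9
    omega
  refine ⟨μ, hcard, fun u hu => ?_⟩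
  have hdecomp : u = Pi.single i (u i) + (u - Pi.single i (u i)) := by abel
  have hrIm : SIn (u - Pi.single i (u i)) Im := by
    intro m hm
    by_cases hmi : m = i
    · subst hmi
      rw [Pi.sub_apply, Pi.single_eq_same, sub_self]
    · have : m ∉ pIdeal i := fun h => hm (Finset.mem_erase.2 ⟨hmi, h⟩)
      rw [Pi.sub_apply, Pi.single_eq_of_ne hmi, hu m this, sub_zero]
  rw [hdecomp, map_add]
  refine SIn_add ?_ (SIn_mono hKsub (hTK _ hrIm))
  rw [← hpId] at hTi_supp
  exact hTi_supp (u i)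

end Aux5
section Aux6
variable [Fintype ι] [PartialOrder ι] [Field F] [Fintype F] {k : ι → ℕ} {w : F → ℕ}

lemma FullLem (hk : ∀ i, 0 < k i) (hw0 : ∀ b : F, w b = 0 ↔ b = 0) :
    ∀ (n : ℕ) (T T' : (∀ i, Fin (k i) → F) →ₗ[F] (∀ i, Fin (k i) → F)),
    (∀ u, omegaW w (T u) = omegaW w u) → (∀ u, omegaW w (T' u) = omegaW w u) →
    (∀ u, T (T' u) = u) → (∀ u, T' (T u) = u) →
    ∀ i : ι, (pIdeal i).card ≤ n →
    ∃ μ, (pIdeal μ).card = (pIdeal i).card ∧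
      (∀ u, SIn u (pIdeal i) → SIn (T u) (pIdeal μ)) ∧
      (∀ u, SIn u (pIdeal μ) → SIn (T' u) (pIdeal i)) := by
  intro n
  induction n with
  | zero =>
    intro T T' _ _ _ _ i hci
    have : 0 < (pIdeal i).card := Finset.card_pos.2 ⟨i, mem_pIdeal.2 le_rfl⟩
    omega
  | succ n ihn =>
    intro T T' hT hT' hTT' hT'T i hci
    by_cases hle : (pIdeal i).card ≤ n
    · exact ihn T T' hT hT' hTT' hT'T i hle
    have hcupper : ∀ a b : ι, a < b → (pIdeal b).card ≤ n + 1 → (pIdeal a).card ≤ n := by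
      intro a b hab hb
      have hsub : pIdeal a ⊆ (pIdeal b).erase b := by
        intro x hx
        refine Finset.mem_erase.2 ⟨?_, mem_pIdeal.2 (le_trans (mem_pIdeal.1 hx) (le_of_lt hab))⟩
        intro hxb
        subst hxb
        exact absurd (mem_pIdeal.1 hx) hab.not_ge
      have h1 := Finset.card_le_card hsub
      have h2 := Finset.card_erase_add_one (mem_pIdeal.2 (le_refl b))
      omega
    have ihi : ∀ j, j < i → ∃ ν, (pIdeal ν).card = (pIdeal j).card ∧
        (∀ u, SIn u (pIdeal j) → SIn (T u) (pIdeal ν)) ∧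
        (∀ u, SIn u (pIdeal ν) → SIn (T' u) (pIdeal j)) := by
      intro j hj
      exact ihn T T' hT hT' hTT' hT'T j (hcupper j i hj hci)
    obtain ⟨μ, hμcard, hμ2⟩ := Lprime hk hw0 T T' hT hT' hTT' hT'T i ihi
    have ihμ : ∀ j, j < μ → ∃ ν, (pIdeal ν).card = (pIdeal j).card ∧
        (∀ u, SIn u (pIdeal j) → SIn (T' u) (pIdeal ν)) ∧
        (∀ u, SIn u (pIdeal ν) → SIn (T u) (pIdeal j)) := by
      intro j hj
      refine ihn T' T hT' hT hT'T hTT' j (hcupper j μ hj ?_)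
      rw [hμcard]; exact hci
    obtain ⟨μ', hμ'card, hμ'2⟩ := Lprime hk hw0 T' T hT' hT hT'T hTT' μ ihμ
    have hViVμ' : ∀ u : ∀ i, Fin (k i) → F, SIn u (pIdeal i) → SIn u (pIdeal μ') := by
      intro u hu
      have h2 := hμ'2 (T u) (hμ2 u hu)
      rwa [hT'T] at h2
    have hiμ' : i ≤ μ' := by
      have h1 := hViVμ' (Pi.single i (Pi.single (⟨0, hk i⟩ : Fin (k i)) (1 : F)))
        (SIn_single (mem_pIdeal.2 le_rfl))
      by_contra hc
      have h0 := h1 i (fun hmem => hc (mem_pIdeal.1 hmem))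
      rw [Pi.single_eq_same (M := fun i => Fin (k i) → F)] at h0
      have := congrFun h0 ⟨0, hk i⟩
      rw [Pi.single_eq_same] at this
      exact one_ne_zero this
    have hpe : pIdeal i = pIdeal μ' := by
      refine Finset.eq_of_subset_of_card_le ?_ ?_
      · intro x hx
        exact mem_pIdeal.2 (le_trans (mem_pIdeal.1 hx) hiμ')
      · rw [hμ'card, hμcard]
    have hμ'i : μ' = i := by
      have h1 : μ' ∈ pIdeal i := hpe ▸ mem_pIdeal.2 (le_refl μ')
      exact le_antisymm (mem_pIdeal.1 h1) hiμ'
    refine ⟨μ, hμcard, hμ2, fun u hu => ?_⟩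
    have := hμ'2 u hu
    rwa [hμ'i] at this

end Aux6
section Aux7
variable [Fintype ι] [PartialOrder ι] [Field F] [Fintype F] {k : ι → ℕ} {w : F → ℕ}

lemma DC_idealOf {u : ∀ i, Fin (k i) → F} : DC (idealOf u) := by
  intro a b hab hb
  obtain ⟨j, hj, hle⟩ := mem_idealOf.1 hb
  exact mem_idealOf.2 ⟨j, hj, le_trans hab hle⟩

lemma SIn_idealOf {u : ∀ i, Fin (k i) → F} : SIn u (idealOf u) := by
  intro m hm
  by_contra hc
  exact hm (mem_idealOf.2 ⟨m, hc, le_refl m⟩)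

end Aux7

theorem stmt12' [Fintype ι] [PartialOrder ι] [Field F] [Fintype F] {k : ι → ℕ}
    (hk : ∀ i, 0 < k i)
    (w : F → ℕ)
    (hw0 : ∀ a : F, w a = 0 ↔ a = 0)
    (T : (∀ i, Fin (k i) → F) →ₗ[F] (∀ i, Fin (k i) → F))
    (hT : ∀ u : ∀ i, Fin (k i) → F, omegaW w (T u) = omegaW w u) :
    ∃ φ : ι ≃ ι,
      (∀ a b : ι, a ≤ b ↔ φ a ≤ φ b) ∧
      (∀ i, k (φ i) = k i) ∧
      ∀ (i : ι) (v : ∀ i, Fin (k i) → F), suppB v ⊆ {i} → v ≠ 0 →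
        idealOf (T v) = pIdeal (φ i) := by
  have hinj : Function.Injective T := by
    intro a b hab
    have h0 : omegaW w (T (a - b)) = 0 := by
      rw [map_sub, hab, sub_self, omegaW_zero hw0]
    rw [hT] at h0
    exact sub_eq_zero.1 ((omegaW_eq_zero_iff hw0).1 h0)
  have hbij : Function.Bijective T := Finite.injective_iff_bijective.1 hinj
  set E := LinearEquiv.ofBijective T hbij with hEdef
  set T' : (∀ i, Fin (k i) → F) →ₗ[F] (∀ i, Fin (k i) → F) := (E.symm.toLinearMap) with hT'def
  have hTT' : ∀ u, T (T' u) = u := fun u => E.apply_symm_apply u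
  have hT'T : ∀ u, T' (T u) = u := fun u => E.symm_apply_apply u
  have hT'w : ∀ u, omegaW w (T' u) = omegaW w u := by
    intro u
    conv_rhs => rw [← hTT' u]
    rw [hT]
  have hfull : ∀ i : ι, ∃ μ, (pIdeal μ).card = (pIdeal i).card ∧
      (∀ u, SIn u (pIdeal i) → SIn (T u) (pIdeal μ)) ∧
      (∀ u, SIn u (pIdeal μ) → SIn (T' u) (pIdeal i)) :=
    fun i => FullLem hk hw0 (pIdeal i).card T T' hT hT'w hTT' hT'T i le_rfl
  choose φ₀ hcard h2 h3 using hfull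
  set bas : ι → (∀ i, Fin (k i) → F) :=
    fun l => Pi.single l (Pi.single (⟨0, hk l⟩ : Fin (k l)) (1 : F)) with hbasdef
  have hbas_supp : ∀ l, SIn (bas l) (pIdeal l) := fun l => SIn_single (mem_pIdeal.2 le_rfl)
  have hbas_ne : ∀ l, bas l l ≠ 0 := by
    intro l h
    rw [hbasdef] at h
    simp only [Pi.single_eq_same (M := fun i => Fin (k i) → F)] at h
    have := congrFun h ⟨0, hk l⟩
    rw [Pi.single_eq_same] at this
    exact one_ne_zero this
  have hpmono : ∀ {a b : ι}, a ≤ b → pIdeal (ι := ι) a ⊆ pIdeal b := by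
    intro a b hab x hx
    exact mem_pIdeal.2 (le_trans (mem_pIdeal.1 hx) hab)
  have hiff : ∀ a b : ι, a ≤ b ↔ φ₀ a ≤ φ₀ b := by
    intro a b
    constructor
    · intro hab
      have k1 : SIn (T' (bas (φ₀ a))) (pIdeal a) := h3 a _ (hbas_supp (φ₀ a))
      have k2 : SIn (T' (bas (φ₀ a))) (pIdeal b) := SIn_mono (hpmono hab) k1
      have k3 : SIn (T (T' (bas (φ₀ a)))) (pIdeal (φ₀ b)) := h2 b _ k2
      rw [hTT'] at k3
      by_contra hc
      exact hbas_ne (φ₀ a) (k3 (φ₀ a) fun hmem => hc (mem_pIdeal.1 hmem))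
    · intro hab
      have k1 : SIn (T (bas a)) (pIdeal (φ₀ a)) := h2 a _ (hbas_supp a)
      have k2 : SIn (T (bas a)) (pIdeal (φ₀ b)) := SIn_mono (hpmono hab) k1
      have k3 : SIn (T' (T (bas a))) (pIdeal b) := h3 b _ k2
      rw [hT'T] at k3
      by_contra hc
      exact hbas_ne a (k3 a fun hmem => hc (mem_pIdeal.1 hmem))
  have hinjφ : Function.Injective φ₀ := by
    intro a b hab
    exact le_antisymm ((hiff a b).2 (le_of_eq hab)) ((hiff b a).2 (le_of_eq hab.symm))
  have hbijφ : Function.Bijective φ₀ := Finite.injective_iff_bijective.1 hinjφ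
  set φ : ι ≃ ι := Equiv.ofBijective φ₀ hbijφ with hφdef
  have hφapp : ∀ i, φ i = φ₀ i := fun i => rfl
  have hclause : ∀ (i : ι) (v : ∀ i, Fin (k i) → F), suppB v ⊆ {i} → v ≠ 0 →
      idealOf (T v) = pIdeal (φ₀ i) := by
    intro i v hsupp hv
    have hvi : SIn v (pIdeal i) := by
      intro m hm
      by_contra hc
      have h1 := hsupp (mem_suppB.2 hc)
      rw [Finset.mem_singleton] at h1
      subst h1
      exact hm (mem_pIdeal.2 le_rfl)
    have hvine : v i ≠ 0 := by
      have : ∃ m, v m ≠ 0 := by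
        by_contra hc; push_neg at hc; exact hv (funext hc)
      obtain ⟨m, hm⟩ := this
      have h1 := hsupp (mem_suppB.2 hm)
      rw [Finset.mem_singleton] at h1
      subst h1
      exact hm
    have hTv : SIn (T v) (pIdeal (φ₀ i)) := h2 i v hvi
    have hsubid : idealOf (T v) ⊆ pIdeal (φ₀ i) := by
      intro m hm
      obtain ⟨j, hj, hle⟩ := mem_idealOf.1 hm
      have hjp : j ∈ pIdeal (φ₀ i) := by
        by_contra hc; exact hj (hTv j hc)
      exact mem_pIdeal.2 (le_trans hle (mem_pIdeal.1 hjp))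
    have hω : omegaW w (T v) = Wblk w v i + ((pIdeal i).erase i).card * Mw w := by
      rw [hT]
      exact omega_cone hw0 hvi hvine
    have hωle : omegaW w (T v) ≤ (idealOf (T v)).card * Mw w :=
      omegaW_le_card hw0 DC_idealOf SIn_idealOf
    have hmwW : mw w ≤ Wblk w v i := mw_le_Wblk hw0 hvine
    have hmwpos := mw_pos (w := w) hw0
    have hcard_ge : (pIdeal i).card ≤ (idealOf (T v)).card := by
      by_contra hc
      push_neg at hc
      have hE : (idealOf (T v)).card ≤ ((pIdeal i).erase i).card := by
        have := Finset.card_erase_add_one (mem_pIdeal.2 (le_refl i))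
        omega
      have hmul : (idealOf (T v)).card * Mw w ≤ ((pIdeal i).erase i).card * Mw w :=
        Nat.mul_le_mul_right _ hE
      rw [hω] at hωle
      set P := ((pIdeal (ι := ι) i).erase i).card * Mw w with hP
      set Q := (idealOf (T v)).card * Mw w with hQ
      omega
    have hcard_ge' : (pIdeal (φ₀ i)).card ≤ (idealOf (T v)).card := by
      rw [hcard i]; exact hcard_ge
    exact Finset.eq_of_subset_of_card_le hsubid hcard_ge'
  have hkle : ∀ i, k i ≤ k (φ₀ i) := by
    intro i
    have hmap : Function.Injective (fun v : Fin (k i) → F => T (Pi.single i v) (φ₀ i)) := by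
      intro a b hab
      by_contra hne
      have hdne : a - b ≠ 0 := sub_ne_zero.2 hne
      set x : ∀ i, Fin (k i) → F := Pi.single i (a - b) with hxdef
      have hxne : x ≠ 0 := by
        intro h
        have := congrFun h i
        rw [hxdef, Pi.single_eq_same (M := fun i => Fin (k i) → F)] at this
        exact hdne this
      have hxsupp : suppB x ⊆ {i} := by
        intro m hm
        rw [mem_suppB] at hm
        rw [Finset.mem_singleton]
        by_contra hc
        exact hm (by rw [hxdef]; exact Pi.single_eq_of_ne (M := fun i => Fin (k i) → F) hc (a - b))
      have hid := hclause i x hxsupp hxne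
      have hmem : φ₀ i ∈ idealOf (T x) := by
        rw [hid]; exact mem_pIdeal.2 le_rfl
      obtain ⟨j, hj, hle⟩ := mem_idealOf.1 hmem
      have hjsub : SIn (T x) (pIdeal (φ₀ i)) := h2 i x (by
        intro m hm
        by_contra hc
        have h1 := hxsupp (mem_suppB.2 hc)
        rw [Finset.mem_singleton] at h1
        subst h1
        exact hm (mem_pIdeal.2 le_rfl))
      have hjp : j ∈ pIdeal (φ₀ i) := by
        by_contra hc; exact hj (hjsub j hc)
      have hjeq : j = φ₀ i := le_antisymm (mem_pIdeal.1 hjp) hle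
      subst hjeq
      have hTx : T x = T (Pi.single i a) - T (Pi.single i b) := by
        rw [hxdef, Pi.single_sub, map_sub]
      rw [hTx, Pi.sub_apply] at hj
      simp only at hab
      rw [hab, sub_self] at hj
      exact hj rfl
    have hcle := Fintype.card_le_of_injective _ hmap
    rw [Fintype.card_fun, Fintype.card_fun, Fintype.card_fin, Fintype.card_fin] at hcle
    exact (Nat.pow_le_pow_iff_right Fintype.one_lt_card).1 hcle
  have hsum : ∑ i, k (φ₀ i) = ∑ i, k i := by
    have := Equiv.sum_comp φ k
    simpa [hφapp] using this
  have hkeq : ∀ i, k i = k (φ₀ i) := by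
    have h5 := (Finset.sum_eq_sum_iff_of_le (s := Finset.univ)
      (f := fun i => k i) (g := fun i => k (φ₀ i)) (fun i _ => hkle i)).1 hsum.symm
    exact fun i => h5 i (Finset.mem_univ i)
  exact ⟨φ, hiff, fun i => (hkeq i).symm, hclause⟩

/-- The map `η_T`, sending `i` to the maximum of the principal ideal
`I_{T v_i}^P` (for any nonzero `v_i ∈ V_i`), is a `(P,π)`-automorphism. -/
theorem stmt12 [Fintype ι] [PartialOrder ι] [Field F] [Fintype F] {k : ι → ℕ}
    (hk : ∀ i, 0 < k i)
    (w : F → ℕ)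
    (hw0 : ∀ a : F, w a = 0 ↔ a = 0)
    (hwneg : ∀ a : F, w (-a) = w a)
    (hwadd : ∀ a b : F, w (a + b) ≤ w a + w b)
    (T : (∀ i, Fin (k i) → F) →ₗ[F] (∀ i, Fin (k i) → F))
    (hT : ∀ u : ∀ i, Fin (k i) → F, omegaW w (T u) = omegaW w u) :
    ∃ φ : ι ≃ ι,
      (∀ a b : ι, a ≤ b ↔ φ a ≤ φ b) ∧
      (∀ i, k (φ i) = k i) ∧
      ∀ (i : ι) (v : ∀ i, Fin (k i) → F), suppB v ⊆ {i} → v ≠ 0 →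
        idealOf (T v) = pIdeal (φ i) := by
  exact stmt12' hk w hw0 T hT
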